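/- The modular lambda function λ(τ) = (e₂(τ) − e₁(τ))/(e₃(τ) − e₁(τ)) is invariant under the principal congruence subgroup Γ(2) of SL₂(ℤ): for every matrix (a b; c d) ∈ SL₂(ℤ) with a and d odd and b and c even, and every τ in the complex upper half-plane ℍ, one has λ((aτ + b)/(cτ + d)) = λ(τ). -/

import Mathlib

noncomputable section

/-- `z` belongs to the lattice `Λ_τ = ℤ + τℤ`. -/
def IsLatticePt (τ z : ℂ) : Prop := ∃ m n : ℤ, z = (m : ℂ) + (n : ℂ) * τ

/-- The Weierstrass `℘`-function of the lattice `Λ_τ = ℤ + τℤ`: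
`℘(z;τ) = 1/z² + Σ_{ω ∈ Λ_τ∖{0}} (1/(z−ω)² − 1/ω²)`. -/
def wp (τ z : ℂ) : ℂ :=
  1 / z ^ 2 + ∑' p : ℤ × ℤ, if p = 0 then 0 else
    (1 / (z - ((p.1 : ℂ) + (p.2 : ℂ) * τ)) ^ 2 - 1 / ((p.1 : ℂ) + (p.2 : ℂ) * τ) ^ 2)

/-- The derivative `℘′(z;τ)` of the Weierstrass `℘`-function with respect to `z`. -/
def wp' (τ z : ℂ) : ℂ := deriv (wp τ) z

/-- The invariant `g₂(τ) = 60 Σ_{ω ∈ Λ_τ∖{0}} ω⁻⁴`. -/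
def g2 (τ : ℂ) : ℂ :=
  60 * ∑' p : ℤ × ℤ, if p = 0 then 0 else (((p.1 : ℂ) + (p.2 : ℂ) * τ) ^ 4)⁻¹

/-- The invariant `g₃(τ) = 140 Σ_{ω ∈ Λ_τ∖{0}} ω⁻⁶`. -/
def g3 (τ : ℂ) : ℂ :=
  140 * ∑' p : ℤ × ℤ, if p = 0 then 0 else (((p.1 : ℂ) + (p.2 : ℂ) * τ) ^ 6)⁻¹

/-- The half-period value `e₁(τ) = ℘(1/2;τ)`. -/
def e1 (τ : ℂ) : ℂ := wp τ (1 / 2)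

/-- The half-period value `e₂(τ) = ℘((1+τ)/2;τ)`. -/
def e2 (τ : ℂ) : ℂ := wp τ ((1 + τ) / 2)

/-- The half-period value `e₃(τ) = ℘(τ/2;τ)`. -/
def e3 (τ : ℂ) : ℂ := wp τ (τ / 2)

/-- The modular lambda function `λ(τ) = (e₂(τ) − e₁(τ))/(e₃(τ) − e₁(τ))`. -/
def mlambda (τ : ℂ) : ℂ := (e2 τ - e1 τ) / (e3 τ - e1 τ)

end


noncomputable section
namespace MLAux
open Filter
open Filter

def om (τ : ℂ) (p : ℤ × ℤ) : ℂ := (p.1 : ℂ) + (p.2 : ℂ) * τ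

lemma om_zero (τ : ℂ) : om τ 0 = 0 := by simp [om]

lemma om_sub (τ : ℂ) (p q : ℤ × ℤ) : om τ (p - q) = om τ p - om τ q := by
  simp only [om, Prod.fst_sub, Prod.snd_sub]; push_cast; ring

lemma om_neg (τ : ℂ) (p : ℤ × ℤ) : om τ (-p) = -om τ p := by
  simp only [om, Prod.fst_neg, Prod.snd_neg]; push_cast; ring

lemma norm_vec_eq (m n : ℤ) : ‖(![m, n] : Fin 2 → ℤ)‖ = ‖(m, n)‖ := by
  rw [EisensteinSeries.norm_eq_max_natAbs, Prod.norm_def, Nat.cast_max]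
  simp [Int.norm_eq_abs, Nat.cast_natAbs]

lemma norm_om_lower {τ : ℂ} (hτ : 0 < τ.im) (p : ℤ × ℤ) :
    EisensteinSeries.r ⟨τ, hτ⟩ * ‖p‖ ≤ ‖om τ p‖ := by
  by_cases hp : p = 0
  · simp [hp, om_zero]
  · have hx : (![p.2, p.1] : Fin 2 → ℤ) ≠ 0 := by
      intro h
      apply hp
      have h1 := congrFun h 0
      have h2 := congrFun h 1
      simp at h1 h2
      exact Prod.ext h2 h1
    have H := EisensteinSeries.r_mul_max_le (⟨τ, hτ⟩ : UpperHalfPlane) hx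
    have hnorm : ‖(![p.2, p.1] : Fin 2 → ℤ)‖ = ‖p‖ := by
      rw [norm_vec_eq, Prod.norm_def, Prod.norm_def, max_comm]
    rw [hnorm] at H
    refine H.trans (le_of_eq ?_)
    simp only [Matrix.cons_val_zero, Matrix.cons_val_one, Matrix.head_cons]
    congr 1
    show (p.2:ℂ) * τ + p.1 = (p.1:ℂ) + (p.2:ℂ) * τ
    ring

lemma summable_norm_rpow : Summable fun p : ℤ × ℤ => ‖p‖ ^ (-(3:ℝ)) := by
  have h := EisensteinSeries.summable_one_div_norm_rpow (k := 3) (by norm_num)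
  have h2 := ((finTwoArrowEquiv ℤ).symm.summable_iff
    (f := fun x : Fin 2 → ℤ => ‖x‖ ^ (-(3:ℝ)))).mpr h
  refine h2.congr fun p => ?_
  have : ‖(finTwoArrowEquiv ℤ).symm p‖ = ‖p‖ := by
    rw [show (finTwoArrowEquiv ℤ).symm p = ![p.1, p.2] from rfl, norm_vec_eq]
  simp only [Function.comp_apply, this]

lemma tendsto_norm_om {τ : ℂ} (hτ : 0 < τ.im) :
    Tendsto (fun p : ℤ × ℤ => ‖om τ p‖) cofinite atTop := by
  have h1 : Tendsto (fun p : ℤ × ℤ => ‖p‖) cofinite atTop := by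
    rw [← cocompact_eq_cofinite (ℤ × ℤ)]
    exact tendsto_norm_cocompact_atTop
  have h2 : Tendsto (fun p : ℤ × ℤ => EisensteinSeries.r ⟨τ, hτ⟩ * ‖p‖) cofinite atTop :=
    (tendsto_const_mul_atTop_of_pos (EisensteinSeries.r_pos _)).mpr h1
  exact tendsto_atTop_mono (norm_om_lower hτ) h2


lemma tendsto_norm_pair : Tendsto (fun p : ℤ × ℤ => ‖p‖) cofinite atTop := by
  rw [← cocompact_eq_cofinite (ℤ × ℤ)]
  exact tendsto_norm_cocompact_atTop

lemma rpow_neg3_eq {x : ℝ} (hx : 0 ≤ x) : x ^ (-(3:ℝ)) = (x ^ 3)⁻¹ := by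
  rw [← Real.rpow_natCast x 3, ← Real.rpow_neg hx]
  norm_num

lemma summable_wp_series {τ : ℂ} (hτ : 0 < τ.im) (z : ℂ) :
    Summable fun p : ℤ × ℤ =>
      if p = 0 then (0:ℂ) else (1 / (z - om τ p) ^ 2 - 1 / (om τ p) ^ 2) := by
  set δ := EisensteinSeries.r ⟨τ, hτ⟩ with hδdef
  have hδ : 0 < δ := EisensteinSeries.r_pos _
  apply Summable.of_norm_bounded_eventually (g := fun p => (12 * ‖z‖ / δ ^ 3) * ‖p‖ ^ (-(3:ℝ)))
    (summable_norm_rpow.mul_left _)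
  filter_upwards [(tendsto_norm_om hτ).eventually_ge_atTop (2 * ‖z‖ + 1),
    tendsto_norm_pair.eventually_ge_atTop 1] with p hω hp
  have hp0 : (0:ℝ) < ‖p‖ := lt_of_lt_of_le one_pos hp
  by_cases hpz : p = 0
  · rw [if_pos hpz, norm_zero]
    positivity
  rw [if_neg hpz]
  set ω := om τ p with hωdef
  have hωpos : (0:ℝ) < ‖ω‖ := lt_of_lt_of_le (by positivity) hω
  have hω0 : ω ≠ 0 := by intro h; rw [h, norm_zero] at hωpos; exact lt_irrefl 0 hωpos
  have hz2 : 2 * ‖z‖ ≤ ‖ω‖ := by linarith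
  have hzω : ‖ω‖ / 2 ≤ ‖z - ω‖ := by
    have := norm_sub_norm_le ω z
    rw [norm_sub_rev] at this
    linarith [norm_sub_norm_le ω z]
  have hzωpos : (0:ℝ) < ‖z - ω‖ := lt_of_lt_of_le (by linarith) hzω
  have hzω0 : z - ω ≠ 0 := by
    intro h; rw [h, norm_zero] at hzωpos; exact lt_irrefl 0 hzωpos
  have key : 1 / (z - ω) ^ 2 - 1 / ω ^ 2 = z * (2 * ω - z) / ((z - ω) ^ 2 * ω ^ 2) := by
    field_simp
    ring
  have hbound1 : ‖2 * ω - z‖ ≤ 3 * ‖ω‖ := by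
    calc ‖2 * ω - z‖ ≤ ‖2 * ω‖ + ‖z‖ := norm_sub_le _ _
      _ ≤ 2 * ‖ω‖ + ‖ω‖ := by
          rw [norm_mul]
          simp only [Complex.norm_ofNat]
          gcongr
          linarith
      _ = 3 * ‖ω‖ := by ring
  rw [key]
  have h3 : ‖z * (2 * ω - z) / ((z - ω) ^ 2 * ω ^ 2)‖ ≤ 12 * ‖z‖ / ‖ω‖ ^ 3 := by
    rw [norm_div, norm_mul, norm_mul, norm_pow, norm_pow]
    calc ‖z‖ * ‖2 * ω - z‖ / (‖z - ω‖ ^ 2 * ‖ω‖ ^ 2)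
        ≤ ‖z‖ * (3 * ‖ω‖) / ((‖ω‖ / 2) ^ 2 * ‖ω‖ ^ 2) := by gcongr <;> positivity
      _ = 12 * ‖z‖ / ‖ω‖ ^ 3 := by
          rw [div_eq_div_iff (by positivity) (by positivity)]
          ring
  refine h3.trans ?_
  have h4 : 12 * ‖z‖ / ‖ω‖ ^ 3 ≤ 12 * ‖z‖ / (δ * ‖p‖) ^ 3 :=
    div_le_div_of_nonneg_left (by positivity) (by positivity)
      (pow_le_pow_left₀ (by positivity) (norm_om_lower hτ p) 3)
  refine h4.trans (le_of_eq ?_)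
  rw [rpow_neg3_eq (norm_nonneg p), mul_pow, div_mul_eq_div_div, div_eq_mul_inv]

open Filter

lemma tendsto_int_norm : Tendsto (fun m : ℤ => |(m:ℝ)|) cofinite atTop := by
  have := (tendsto_norm_cocompact_atTop (E := ℝ)).comp Int.tendsto_coe_cofinite
  simpa [Function.comp_def, Real.norm_eq_abs] using this

lemma summable_sq_inv : Summable fun m : ℤ => 1 / ((m:ℝ)) ^ 2 :=
  Real.summable_one_div_int_pow.mpr one_lt_two

lemma norm_int_complex (m : ℤ) : ‖(m:ℂ)‖ = |(m:ℝ)| := by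
  exact Complex.norm_intCast m

lemma summable_row (w : ℂ) : Summable fun m : ℤ => 1 / (w - (m:ℂ)) ^ 2 := by
  apply Summable.of_norm_bounded_eventually (g := fun m : ℤ => 4 * (1 / ((m:ℝ)) ^ 2))
    (summable_sq_inv.mul_left 4)
  filter_upwards [tendsto_int_norm.eventually_ge_atTop (2 * ‖w‖ + 1)] with m hm
  have hm0 : (0:ℝ) < |(m:ℝ)| := lt_of_lt_of_le (by positivity) hm
  have hlow : |(m:ℝ)| / 2 ≤ ‖w - (m:ℂ)‖ := by
    have h1 := norm_sub_norm_le ((m:ℂ)) w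
    rw [norm_sub_rev, norm_int_complex] at h1
    linarith
  rw [norm_div, norm_one, norm_pow]
  have h2 : (|(m:ℝ)| / 2) ^ 2 ≤ ‖w - (m:ℂ)‖ ^ 2 := by
    apply pow_le_pow_left₀ (by positivity) hlow
  calc 1 / ‖w - (m:ℂ)‖ ^ 2 ≤ 1 / ((|(m:ℝ)| / 2) ^ 2) := by
        apply one_div_le_one_div_of_le (by positivity) h2
    _ = 4 * (1 / ((m:ℝ)) ^ 2) := by
        rw [div_pow, ← sq_abs ((m:ℝ))]
        field_simp
        norm_num


lemma summable_col {τ : ℂ} (hτim : τ.im ≠ 0) (w : ℂ) :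
    Summable fun n : ℤ => 1 / (w - (n:ℂ) * τ) ^ 2 := by
  have hτ0 : 0 < |τ.im| := abs_pos.mpr hτim
  apply Summable.of_norm_bounded_eventually
    (g := fun n : ℤ => (4 / τ.im ^ 2) * (1 / ((n:ℝ)) ^ 2)) (summable_sq_inv.mul_left _)
  filter_upwards [tendsto_int_norm.eventually_ge_atTop ((2 * |w.im| + 1) / |τ.im|)] with n hn
  have h1 : 2 * |w.im| + 1 ≤ |(n:ℝ)| * |τ.im| := by
    rw [div_le_iff₀ hτ0] at hn; linarith
  have hn0 : (0:ℝ) < |(n:ℝ)| := by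
    rcases eq_or_ne n 0 with h | h
    · exfalso; rw [h] at h1; simp at h1; nlinarith [abs_nonneg w.im]
    · positivity
  have hlow : |(n:ℝ)| * |τ.im| / 2 ≤ ‖w - (n:ℂ) * τ‖ := by
    have him : |(w - (n:ℂ) * τ).im| ≤ ‖w - (n:ℂ) * τ‖ := by
      exact Complex.abs_im_le_norm _
    have heq : (w - (n:ℂ) * τ).im = w.im - (n:ℝ) * τ.im := by
      simp [Complex.sub_im, Complex.mul_im]
    have h2 : |(n:ℝ) * τ.im| - |w.im| ≤ |w.im - (n:ℝ) * τ.im| := by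
      rw [abs_sub_comm]
      exact abs_sub_abs_le_abs_sub _ _
    rw [abs_mul] at h2
    rw [heq] at him
    linarith
  rw [norm_div, norm_one, norm_pow]
  have h2 : (|(n:ℝ)| * |τ.im| / 2) ^ 2 ≤ ‖w - (n:ℂ) * τ‖ ^ 2 :=
    pow_le_pow_left₀ (by positivity) hlow 2
  have hnne : ((n:ℝ)) ≠ 0 := by
    intro h; rw [h] at hn0; simp at hn0
  calc 1 / ‖w - (n:ℂ) * τ‖ ^ 2 ≤ 1 / ((|(n:ℝ)| * |τ.im| / 2) ^ 2) :=
        one_div_le_one_div_of_le (by positivity) h2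
    _ = 4 / τ.im ^ 2 * (1 / ((n:ℝ)) ^ 2) := by
        rw [div_pow, mul_pow, sq_abs, sq_abs]
        field_simp
        ring


lemma summable_G {τ : ℂ} (hτ : 0 < τ.im) (z : ℂ) (p₀ : ℤ × ℤ) :
    Summable (fun p : ℤ × ℤ => 1 / (z - om τ (p - p₀)) ^ 2 - 1 / (z - om τ p) ^ 2) := by
  have hq : Summable (fun p : ℤ × ℤ =>
      if p = 0 then (0:ℂ) else (1 / (z - om τ p) ^ 2 - 1 / (om τ p) ^ 2)) :=
    summable_wp_series hτ z
  have hq₁ : Summable (fun p : ℤ × ℤ =>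
      if p = 0 then (0:ℂ) else (1 / (z - om τ (p - p₀)) ^ 2 - 1 / (om τ p) ^ 2)) := by
    refine (summable_wp_series hτ (z + om τ p₀)).congr fun p => ?_
    rcases eq_or_ne p 0 with h | h
    · simp [h]
    · rw [if_neg h, if_neg h, om_sub]
      ring_nf
  have hd : Summable (fun p : ℤ × ℤ =>
      if p = 0 then (1 / (z - om τ (-p₀)) ^ 2 - 1 / (z - om τ 0) ^ 2) else (0:ℂ)) := by
    apply summable_of_ne_finset_zero (s := ({0} : Finset (ℤ × ℤ)))
    intro p hp
    rw [if_neg (by simpa using hp)]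
  refine ((hq₁.sub hq).add hd).congr fun p => ?_
  rcases eq_or_ne p 0 with h | h
  · simp [h, zero_sub]
  · simp only [if_neg h]
    ring

lemma wp_shift_core {τ : ℂ} (hτ : 0 < τ.im) (z : ℂ) (p₀ : ℤ × ℤ)
    (hG0 : ∑' p : ℤ × ℤ, (1 / (z - om τ (p - p₀)) ^ 2 - 1 / (z - om τ p) ^ 2) = 0) :
    wp τ (z + om τ p₀) = wp τ z := by
  have hq : Summable (fun p : ℤ × ℤ =>
      if p = 0 then (0:ℂ) else (1 / (z - om τ p) ^ 2 - 1 / (om τ p) ^ 2)) :=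
    summable_wp_series hτ z
  have hq₁ : Summable (fun p : ℤ × ℤ =>
      if p = 0 then (0:ℂ) else (1 / (z - om τ (p - p₀)) ^ 2 - 1 / (om τ p) ^ 2)) := by
    refine (summable_wp_series hτ (z + om τ p₀)).congr fun p => ?_
    rcases eq_or_ne p 0 with h | h
    · simp [h]
    · rw [if_neg h, if_neg h, om_sub]
      ring_nf
  have hG : Summable (fun p : ℤ × ℤ =>
      1 / (z - om τ (p - p₀)) ^ 2 - 1 / (z - om τ p) ^ 2) := summable_G hτ z p₀
  have hd : Summable (fun p : ℤ × ℤ =>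
      if p = 0 then (1 / (z - om τ (-p₀)) ^ 2 - 1 / (z - om τ 0) ^ 2) else (0:ℂ)) := by
    apply summable_of_ne_finset_zero (s := ({0} : Finset (ℤ × ℤ)))
    intro p hp
    rw [if_neg (by simpa using hp)]
  have hdsum : ∑' p : ℤ × ℤ, (if p = 0 then
      (1 / (z - om τ (-p₀)) ^ 2 - 1 / (z - om τ 0) ^ 2) else (0:ℂ)) =
      1 / (z - om τ (-p₀)) ^ 2 - 1 / (z - om τ 0) ^ 2 := by
    rw [tsum_eq_single 0 (fun p hp => if_neg hp)]
    exact if_pos rfl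
  -- pointwise identity: q₁ = q + (G - d)
  have hpt : ∀ p : ℤ × ℤ,
      (if p = 0 then (0:ℂ) else (1 / (z - om τ (p - p₀)) ^ 2 - 1 / (om τ p) ^ 2)) =
      (if p = 0 then (0:ℂ) else (1 / (z - om τ p) ^ 2 - 1 / (om τ p) ^ 2)) +
      ((1 / (z - om τ (p - p₀)) ^ 2 - 1 / (z - om τ p) ^ 2) -
        (if p = 0 then (1 / (z - om τ (-p₀)) ^ 2 - 1 / (z - om τ 0) ^ 2) else (0:ℂ))) := by
    intro p
    rcases eq_or_ne p 0 with h | h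
    · simp [h, zero_sub]
    · simp only [if_neg h]
      ring
  have hsum1 : (∑' p : ℤ × ℤ,
      if p = 0 then (0:ℂ) else (1 / (z - om τ (p - p₀)) ^ 2 - 1 / (om τ p) ^ 2)) =
      (∑' p : ℤ × ℤ, if p = 0 then (0:ℂ) else (1 / (z - om τ p) ^ 2 - 1 / (om τ p) ^ 2)) +
      (∑' p : ℤ × ℤ, (1 / (z - om τ (p - p₀)) ^ 2 - 1 / (z - om τ p) ^ 2) -
       ∑' p : ℤ × ℤ, (if p = 0 then (1 / (z - om τ (-p₀)) ^ 2 - 1 / (z - om τ 0) ^ 2)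
          else (0:ℂ))) := by
    rw [tsum_congr hpt, hq.tsum_add (hG.sub hd), hG.tsum_sub hd]
  have hwp1 : wp τ (z + om τ p₀) = 1 / (z - om τ (-p₀)) ^ 2 +
      ∑' p : ℤ × ℤ,
        (if p = 0 then (0:ℂ) else (1 / (z - om τ (p - p₀)) ^ 2 - 1 / (om τ p) ^ 2)) := by
    rw [wp]
    congr 1
    · rw [om_neg, sub_neg_eq_add]
    · apply tsum_congr
      intro p
      rcases eq_or_ne p 0 with h | h
      · simp [h]
      · rw [if_neg h, if_neg h, om_sub]
        simp only [om]
        ring_nf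
  have hwp2 : wp τ z = 1 / (z - om τ 0) ^ 2 +
      ∑' p : ℤ × ℤ,
        (if p = 0 then (0:ℂ) else (1 / (z - om τ p) ^ 2 - 1 / (om τ p) ^ 2)) := by
    rw [wp, om_zero, sub_zero]
    rfl
  rw [hwp1, hwp2, hsum1, hdsum, hG0]
  ring

set_option maxHeartbeats 1000000 in
lemma tsum_G_horizontal {τ : ℂ} (hτ : 0 < τ.im) (z : ℂ) (m₀ : ℤ) :
    ∑' p : ℤ × ℤ, (1 / (z - om τ (p - (m₀, 0))) ^ 2 - 1 / (z - om τ p) ^ 2) = 0 := by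
  have hG := summable_G hτ z (m₀, 0)
  rw [← (Equiv.prodComm ℤ ℤ).tsum_eq
    (fun p : ℤ × ℤ => 1 / (z - om τ (p - (m₀, 0))) ^ 2 - 1 / (z - om τ p) ^ 2)]
  have hsw : Summable fun p : ℤ × ℤ =>
      (fun q : ℤ × ℤ => 1 / (z - om τ (q - (m₀, 0))) ^ 2 - 1 / (z - om τ q) ^ 2)
        ((Equiv.prodComm ℤ ℤ) p) :=
    ((Equiv.prodComm ℤ ℤ).summable_iff).mpr hG
  have hrow1 : ∀ n : ℤ, Summable fun m : ℤ => 1 / ((z - (n:ℂ) * τ) - ((m - m₀ : ℤ) : ℂ)) ^ 2 :=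
    fun n => ((Equiv.subRight m₀).summable_iff).mpr (summable_row (z - (n:ℂ) * τ))
  have hrow2 : ∀ n : ℤ, Summable fun m : ℤ => 1 / ((z - (n:ℂ) * τ) - ((m : ℤ) : ℂ)) ^ 2 :=
    fun n => summable_row (z - (n:ℂ) * τ)
  have hptA : ∀ n m : ℤ, 1 / (z - om τ ((m, n) - (m₀, 0))) ^ 2 =
      1 / ((z - (n:ℂ) * τ) - ((m - m₀ : ℤ) : ℂ)) ^ 2 := by
    intro n m
    simp only [om, Prod.mk_sub_mk, sub_zero]
    push_cast
    ring_nf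
  have hptB : ∀ n m : ℤ, 1 / (z - om τ (m, n)) ^ 2 =
      1 / ((z - (n:ℂ) * τ) - ((m : ℤ) : ℂ)) ^ 2 := by
    intro n m
    simp only [om]
    ring_nf
  rw [hsw.tsum_prod' (fun n => by
    refine ((hrow1 n).sub (hrow2 n)).congr fun m => ?_
    simp only [Equiv.prodComm_apply, Prod.swap_prod_mk]
    rw [hptA n m, hptB n m])]
  have inner : ∀ n : ℤ, (∑' m : ℤ,
      (fun q : ℤ × ℤ => 1 / (z - om τ (q - (m₀, 0))) ^ 2 - 1 / (z - om τ q) ^ 2)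
        ((Equiv.prodComm ℤ ℤ) (n, m))) = 0 := by
    intro n
    have : (∑' m : ℤ,
        (fun q : ℤ × ℤ => 1 / (z - om τ (q - (m₀, 0))) ^ 2 - 1 / (z - om τ q) ^ 2)
          ((Equiv.prodComm ℤ ℤ) (n, m))) =
        ∑' m : ℤ, (1 / ((z - (n:ℂ) * τ) - ((m - m₀ : ℤ) : ℂ)) ^ 2 -
          1 / ((z - (n:ℂ) * τ) - ((m : ℤ) : ℂ)) ^ 2) := by
      apply tsum_congr
      intro m
      simp only [Equiv.prodComm_apply, Prod.swap_prod_mk]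
      rw [hptA n m, hptB n m]
    rw [this, (hrow1 n).tsum_sub (hrow2 n)]
    have := (Equiv.subRight m₀).tsum_eq (fun k : ℤ => 1 / ((z - (n:ℂ) * τ) - (k : ℂ)) ^ 2)
    simp only [Equiv.subRight_apply] at this
    rw [this]
    ring
  rw [tsum_congr inner, tsum_zero]

set_option maxHeartbeats 1000000 in
lemma tsum_G_vertical {τ : ℂ} (hτ : 0 < τ.im) (z : ℂ) (n₀ : ℤ) :
    ∑' p : ℤ × ℤ, (1 / (z - om τ (p - (0, n₀))) ^ 2 - 1 / (z - om τ p) ^ 2) = 0 := by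
  have hG := summable_G hτ z (0, n₀)
  have hτim : τ.im ≠ 0 := ne_of_gt hτ
  have hcol1 : ∀ m : ℤ, Summable fun n : ℤ => 1 / ((z - (m:ℂ)) - ((n - n₀ : ℤ) : ℂ) * τ) ^ 2 :=
    fun m => ((Equiv.subRight n₀).summable_iff).mpr (summable_col hτim (z - (m:ℂ)))
  have hcol2 : ∀ m : ℤ, Summable fun n : ℤ => 1 / ((z - (m:ℂ)) - ((n : ℤ) : ℂ) * τ) ^ 2 :=
    fun m => summable_col hτim (z - (m:ℂ))
  have hptA : ∀ m n : ℤ, 1 / (z - om τ ((m, n) - (0, n₀))) ^ 2 =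
      1 / ((z - (m:ℂ)) - ((n - n₀ : ℤ) : ℂ) * τ) ^ 2 := by
    intro m n
    simp only [om, Prod.mk_sub_mk, sub_zero]
    push_cast
    ring_nf
  have hptB : ∀ m n : ℤ, 1 / (z - om τ (m, n)) ^ 2 =
      1 / ((z - (m:ℂ)) - ((n : ℤ) : ℂ) * τ) ^ 2 := by
    intro m n
    simp only [om]
    ring_nf
  rw [hG.tsum_prod' (fun m => by
    refine ((hcol1 m).sub (hcol2 m)).congr fun n => ?_
    rw [hptA m n, hptB m n])]
  have inner : ∀ m : ℤ, (∑' n : ℤ,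
      (1 / (z - om τ ((m, n) - (0, n₀))) ^ 2 - 1 / (z - om τ (m, n)) ^ 2)) = 0 := by
    intro m
    have : (∑' n : ℤ, (1 / (z - om τ ((m, n) - (0, n₀))) ^ 2 - 1 / (z - om τ (m, n)) ^ 2)) =
        ∑' n : ℤ, (1 / ((z - (m:ℂ)) - ((n - n₀ : ℤ) : ℂ) * τ) ^ 2 -
          1 / ((z - (m:ℂ)) - ((n : ℤ) : ℂ) * τ) ^ 2) := by
      apply tsum_congr
      intro n
      rw [hptA m n, hptB m n]
    rw [this, (hcol1 m).tsum_sub (hcol2 m)]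
    have := (Equiv.subRight n₀).tsum_eq (fun k : ℤ => 1 / ((z - (m:ℂ)) - (k : ℂ) * τ) ^ 2)
    simp only [Equiv.subRight_apply] at this
    rw [this]
    ring
  rw [tsum_congr inner, tsum_zero]

lemma wp_shift {τ : ℂ} (hτ : 0 < τ.im) (z : ℂ) (m n : ℤ) :
    wp τ (z + ((m : ℂ) + (n : ℂ) * τ)) = wp τ z := by
  have hv := wp_shift_core hτ z (0, n) (tsum_G_vertical hτ z n)
  have hh := wp_shift_core hτ (z + om τ (0, n)) (m, 0) (tsum_G_horizontal hτ _ m)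
  have harg : z + ((m : ℂ) + (n : ℂ) * τ) = (z + om τ (0, n)) + om τ (m, 0) := by
    simp only [om]
    push_cast
    ring
  rw [harg, hh, hv]

lemma wp_eq_om (τ z : ℂ) : wp τ z = 1 / z ^ 2 + ∑' p : ℤ × ℤ,
    (if p = 0 then 0 else (1 / (z - om τ p) ^ 2 - 1 / (om τ p) ^ 2)) := rfl

/-- The change-of-basis equivalence of `ℤ × ℤ` attached to a matrix of determinant one. -/
def sl2Equiv (a b c d : ℤ) (hdet : a * d - b * c = 1) : (ℤ × ℤ) ≃ (ℤ × ℤ) where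
  toFun p := (d * p.1 + b * p.2, c * p.1 + a * p.2)
  invFun q := (a * q.1 - b * q.2, -c * q.1 + d * q.2)
  left_inv p := by
    ext
    · show a * (d * p.1 + b * p.2) - b * (c * p.1 + a * p.2) = p.1
      linear_combination p.1 * hdet
    · show -c * (d * p.1 + b * p.2) + d * (c * p.1 + a * p.2) = p.2
      linear_combination p.2 * hdet
  right_inv q := by
    ext
    · show d * (a * q.1 - b * q.2) + b * (-c * q.1 + d * q.2) = q.1
      linear_combination q.1 * hdet
    · show c * (a * q.1 - b * q.2) + a * (-c * q.1 + d * q.2) = q.2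
      linear_combination q.2 * hdet

lemma sl2Equiv_eq_zero_iff (a b c d : ℤ) (hdet : a * d - b * c = 1) (p : ℤ × ℤ) :
    sl2Equiv a b c d hdet p = 0 ↔ p = 0 := by
  constructor
  · intro h
    have := congrArg (sl2Equiv a b c d hdet).symm h
    rw [Equiv.symm_apply_apply] at this
    rw [this]
    show ((a * 0 - b * 0 : ℤ), (-c * 0 + d * 0 : ℤ)) = (0 : ℤ × ℤ)
    simp
  · intro h
    rw [h]
    show ((d * 0 + b * 0 : ℤ), (c * 0 + a * 0 : ℤ)) = (0 : ℤ × ℤ)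
    simp

lemma wp_homog {a b c d : ℤ} (hdet : a * d - b * c = 1) {τ : ℂ}
    (hμ : (c:ℂ) * τ + (d:ℂ) ≠ 0) (z : ℂ) :
    wp (((a:ℂ) * τ + (b:ℂ)) / ((c:ℂ) * τ + (d:ℂ))) z =
      ((c:ℂ) * τ + (d:ℂ)) ^ 2 * wp τ (((c:ℂ) * τ + (d:ℂ)) * z) := by
  set μ : ℂ := (c:ℂ) * τ + (d:ℂ) with hμdef
  set τ' : ℂ := ((a:ℂ) * τ + (b:ℂ)) / μ with hτ'def
  set e := sl2Equiv a b c d hdet with hedef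
  have key1 : ∀ p : ℤ × ℤ, om τ' p = om τ (e p) / μ := by
    intro p
    show (p.1 : ℂ) + (p.2 : ℂ) * (((a:ℂ) * τ + (b:ℂ)) / μ) =
      (((d * p.1 + b * p.2 : ℤ) : ℂ) + ((c * p.1 + a * p.2 : ℤ) : ℂ) * τ) / μ
    field_simp
    push_cast
    ring
  have hterm : ∀ w : ℂ, 1 / (z - w / μ) ^ 2 = μ ^ 2 * (1 / (μ * z - w) ^ 2) := by
    intro w
    rw [show z - w / μ = (μ * z - w) / μ by field_simp, div_pow, one_div_div, mul_one_div]
  have hterm2 : ∀ w : ℂ, 1 / (w / μ) ^ 2 = μ ^ 2 * (1 / w ^ 2) := by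
    intro w
    rw [div_pow, one_div_div, mul_one_div]
  rw [wp_eq_om, wp_eq_om]
  have hz : 1 / z ^ 2 = μ ^ 2 * (1 / (μ * z) ^ 2) := by
    have := hterm 0
    simpa using this
  have hsummand : ∀ p : ℤ × ℤ,
      (if p = 0 then (0:ℂ) else (1 / (z - om τ' p) ^ 2 - 1 / (om τ' p) ^ 2)) =
      (fun q : ℤ × ℤ => μ ^ 2 *
        (if q = 0 then (0:ℂ) else (1 / (μ * z - om τ q) ^ 2 - 1 / (om τ q) ^ 2))) (e p) := by
    intro p
    simp only []
    rw [key1 p, hterm, hterm2, ← mul_sub]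
    by_cases h : p = 0
    · rw [if_pos h, if_pos ((sl2Equiv_eq_zero_iff a b c d hdet p).mpr h), mul_zero]
    · rw [if_neg h, if_neg (fun hh => h ((sl2Equiv_eq_zero_iff a b c d hdet p).mp hh))]
  rw [tsum_congr hsummand, e.tsum_eq (fun q : ℤ × ℤ => μ ^ 2 *
    (if q = 0 then (0:ℂ) else (1 / (μ * z - om τ q) ^ 2 - 1 / (om τ q) ^ 2))), tsum_mul_left, hz]
  ring

end MLAux
end

/-- The modular lambda function `λ` is invariant under the principal
congruence subgroup `Γ(2)` of `SL₂(ℤ)`: for every matrix `(a b; c d) ∈ SL₂(ℤ)` with `a`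
and `d` odd and `b` and `c` even, and every `τ` in the upper half-plane,
`λ((aτ + b)/(cτ + d)) = λ(τ)`. -/
theorem mlambda_Gamma_two_invariant (a b c d : ℤ) (hdet : a * d - b * c = 1)
    (hao : Odd a) (hdo : Odd d) (hbe : Even b) (hce : Even c)
    (τ : ℂ) (hτ : 0 < τ.im) :
    mlambda (((a : ℂ) * τ + (b : ℂ)) / ((c : ℂ) * τ + (d : ℂ))) = mlambda τ := by
  obtain ⟨α, hα⟩ := hao
  obtain ⟨δ, hδ⟩ := hdo
  obtain ⟨β, hβ⟩ := hbe
  obtain ⟨γ, hγ⟩ := hce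
  have ha : (a:ℂ) = 2*(α:ℂ)+1 := by exact_mod_cast hα
  have hd : (d:ℂ) = 2*(δ:ℂ)+1 := by exact_mod_cast hδ
  have hb : (b:ℂ) = (β:ℂ)+(β:ℂ) := by exact_mod_cast hβ
  have hc : (c:ℂ) = (γ:ℂ)+(γ:ℂ) := by exact_mod_cast hγ
  have hμ : (c:ℂ) * τ + (d:ℂ) ≠ 0 := by
    intro h
    have him := congrArg Complex.im h
    simp only [Complex.add_im, Complex.mul_im, Complex.intCast_im, Complex.intCast_re,
      Complex.zero_im, zero_mul, add_zero, mul_zero, zero_add] at him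
    have hc0 : (c:ℝ) = 0 := by
      rcases mul_eq_zero.mp him with h' | h'
      · exact h'
      · exact absurd h' (ne_of_gt hτ)
    have hc0' : c = 0 := by exact_mod_cast hc0
    rw [hc0'] at h
    simp only [Int.cast_zero, zero_mul, zero_add] at h
    have hd0 : d = 0 := by exact_mod_cast h
    rw [hc0', hd0] at hdet
    simp at hdet
  unfold mlambda e1 e2 e3
  rw [MLAux.wp_homog hdet hμ, MLAux.wp_homog hdet hμ, MLAux.wp_homog hdet hμ]
  rw [show ((c:ℂ)*τ + (d:ℂ)) * ((1 + ((a:ℂ)*τ + (b:ℂ))/((c:ℂ)*τ + (d:ℂ)))/2)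
      = (1+τ)/2 + (((δ+β : ℤ):ℂ) + ((γ+α : ℤ):ℂ)*τ) by
    field_simp
    rw [ha, hb, hc, hd]
    push_cast
    ring]
  rw [show ((c:ℂ)*τ + (d:ℂ)) * ((1:ℂ)/2) = (1:ℂ)/2 + (((δ : ℤ):ℂ) + ((γ : ℤ):ℂ)*τ) by
    rw [hc, hd]
    push_cast
    ring]
  rw [show ((c:ℂ)*τ + (d:ℂ)) * ((((a:ℂ)*τ + (b:ℂ))/((c:ℂ)*τ + (d:ℂ)))/2)
      = τ/2 + (((β : ℤ):ℂ) + ((α : ℤ):ℂ)*τ) by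
    field_simp
    rw [ha, hb]
    push_cast
    ring]
  rw [MLAux.wp_shift hτ ((1+τ)/2) (δ+β) (γ+α), MLAux.wp_shift hτ (1/2) δ γ,
    MLAux.wp_shift hτ (τ/2) β α]
  rw [← mul_sub, ← mul_sub, mul_div_mul_left _ _ (pow_ne_zero 2 hμ)]
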